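/- Let (Z_t)_{t≥1} be uniformly bounded random variables (|Z_t| ≤ ρ) and τ a stopping-time-like random variable with finite expectation such that Z_t = 0 whenever t > τ, ∑_{t=1}^{τ} Z_t = S for a fixed random variable S, and E[Z_t | τ ≥ t] ≥ C > 0 for all t with P(τ ≥ t) > 0. Then E[τ] ≤ E[S]/C. -/

import Mathlib

open MeasureTheory ENNReal

/-- Adjusted Wald-type stopping theorem: if `(Z_t)_{t≥1}` are uniformly bounded,
`Z_t = 0` for `t > τ`, `∑_{t=1}^{τ} Z_t = S`, `E[τ] < ∞`, and
`E[Z_t | τ ≥ t] ≥ C > 0` whenever `P(τ ≥ t) > 0`, then `E[τ] ≤ E[S]/C`. -/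
theorem stmt_5 {Ω : Type*} [MeasurableSpace Ω] (μ : Measure Ω) [IsProbabilityMeasure μ]
    (Z : ℕ → Ω → ℝ) (τ : Ω → ℕ) (S : Ω → ℝ) (ρ C : ℝ) (hC : 0 < C)
    (hZm : ∀ t, Measurable (Z t)) (hτm : Measurable τ)
    (hSint : Integrable S μ) (hτint : Integrable (fun ω => (τ ω : ℝ)) μ)
    (hbound : ∀ t ω, |Z t ω| ≤ ρ)
    (hzero : ∀ t ω, τ ω < t → Z t ω = 0)
    (htel : ∀ ω, ∑ t ∈ Finset.Icc 1 (τ ω), Z t ω = S ω)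
    (hdrift : ∀ t : ℕ, 1 ≤ t → 0 < μ {ω | t ≤ τ ω} →
      C * (μ {ω | t ≤ τ ω}).toReal ≤ ∫ ω in {ω | t ≤ τ ω}, Z t ω ∂μ) :
    ∫ ω, (τ ω : ℝ) ∂μ ≤ (∫ ω, S ω ∂μ) / C := by
  classical
  set s : ℕ → Set Ω := fun t => {ω | t + 1 ≤ τ ω} with hs
  have hsm : ∀ t, MeasurableSet (s t) := fun t =>
    hτm measurableSet_Ici
  set A : ℕ → ℝ≥0∞ := fun t => μ (s t) with hA
  have hAne : ∀ t, A t ≠ ⊤ := fun t => (measure_lt_top μ _).ne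
  -- the ENNReal-valued total: ∑' A t = ∫⁻ τ
  have hind : ∀ ω, (∑' t : ℕ, (s t).indicator (fun _ => (1 : ℝ≥0∞)) ω) = (τ ω : ℝ≥0∞) := by
    intro ω
    rw [tsum_eq_sum (s := Finset.range (τ ω)) (by
      intro t ht
      simp only [Finset.mem_range, not_lt] at ht
      exact Set.indicator_of_notMem (by simp [hs]; omega) _)]
    rw [Finset.sum_congr rfl (fun t ht => Set.indicator_of_mem
      (by simp only [Finset.mem_range] at ht; simp [hs]; omega) _)]
    simp
  have hAsum : (∑' t, A t) = ∫⁻ ω, (τ ω : ℝ≥0∞) ∂μ := by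
    have := lintegral_tsum (μ := μ)
      (f := fun t => (s t).indicator (fun _ => (1 : ℝ≥0∞)))
      (fun t => ((measurable_one.indicator (hsm t)).aemeasurable))
    simp only [hind] at this
    rw [this]
    exact tsum_congr fun t => (lintegral_indicator_one (hsm t)).symm
  have hlt : ∫⁻ ω, (τ ω : ℝ≥0∞) ∂μ ≠ ⊤ := by
    have h2 : ∫⁻ ω, (‖(τ ω : ℝ)‖₊ : ℝ≥0∞) ∂μ < ⊤ := hτint.2
    have he : ∀ ω, ((‖(τ ω : ℝ)‖₊ : ℝ≥0∞)) = (τ ω : ℝ≥0∞) := by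
      intro ω; simp
    simp only [he] at h2
    exact h2.ne
  have hAtsum_ne : (∑' t, A t) ≠ ⊤ := by rw [hAsum]; exact hlt
  set a : ℕ → ℝ := fun t => (A t).toReal with ha
  have ha_sum : Summable a := ENNReal.summable_toReal hAtsum_ne
  have ha_nonneg : ∀ t, 0 ≤ a t := fun t => ENNReal.toReal_nonneg
  -- ∫ τ = ∑' a
  have hτeq : ∫ ω, (τ ω : ℝ) ∂μ = ∑' t, a t := by
    rw [integral_eq_lintegral_of_nonneg_ae (ae_of_all _ fun ω => by positivity)
      hτint.1]
    simp only [ENNReal.ofReal_natCast]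
    rw [← hAsum, ENNReal.tsum_toReal_eq hAne]
  -- b t
  set b : ℕ → ℝ := fun t => ∫ ω in s t, Z (t + 1) ω ∂μ with hb
  -- Z (t+1) vanishes off s t
  have hZs : ∀ t ω, ω ∉ s t → Z (t + 1) ω = 0 := by
    intro t ω hω
    exact hzero _ _ (by simp [hs] at hω; omega)
  have hρ : 0 ≤ ρ := by
    obtain ⟨ω⟩ : Nonempty Ω := by
      by_contra h
      rw [not_nonempty_iff] at h
      have := measure_univ (μ := μ)
      simp [Set.univ_eq_empty_iff.2 h] at this
    exact (abs_nonneg _).trans (hbound 0 ω)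
  have hZint : ∀ t : ℕ, Integrable (Z t) μ := fun t =>
    (integrable_const ρ).mono' (hZm t).aestronglyMeasurable
      (ae_of_all _ fun ω => by simpa using hbound t ω)
  -- b t as full-space integral
  have hbfull : ∀ t, b t = ∫ ω, Z (t + 1) ω ∂μ := by
    intro t
    show (∫ ω in s t, Z (t + 1) ω ∂μ) = _
    rw [← integral_indicator (hsm t)]
    congr 1
    ext ω
    by_cases hω : ω ∈ s t
    · simp [Set.indicator_of_mem hω]
    · simp [Set.indicator_of_notMem hω, hZs t ω hω]
  -- drift bound
  have hCb : ∀ t, C * a t ≤ b t := by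
    intro t
    rcases eq_or_lt_of_le (zero_le : 0 ≤ A t) with h0 | hpos
    · have hA0 : A t = 0 := h0.symm
      have : μ.restrict (s t) = 0 := by
        rw [Measure.restrict_eq_zero]; exact hA0
      simp [hb, ha, hA0, this]
    · have := hdrift (t + 1) (by omega) (by exact hpos)
      exact this
  -- norm bound on b
  have hnorm : ∀ t, ∫ ω, ‖Z (t + 1) ω‖ ∂μ ≤ ρ * a t := by
    intro t
    have : ∫ ω, ‖Z (t + 1) ω‖ ∂μ = ∫ ω in s t, ‖Z (t + 1) ω‖ ∂μ := by
      rw [← integral_indicator (hsm t)]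
      congr 1
      ext ω
      by_cases hω : ω ∈ s t
      · simp [Set.indicator_of_mem hω]
      · simp [Set.indicator_of_notMem hω, hZs t ω hω]
    rw [this]
    calc ∫ ω in s t, ‖Z (t + 1) ω‖ ∂μ ≤ ∫ ω in s t, ρ ∂μ := by
          apply setIntegral_mono_on (hZint (t+1)).norm.integrableOn
            (integrableOn_const (measure_lt_top μ _).ne) (hsm t)
          intro ω _
          simpa using hbound (t+1) ω
      _ = ρ * a t := by
          rw [setIntegral_const]
          rw [smul_eq_mul, mul_comm]; rfl
  have hb_sum : Summable b := by
    apply Summable.of_norm_bounded (ha_sum.mul_left ρ)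
    intro t
    rw [hbfull t]
    calc ‖∫ ω, Z (t + 1) ω ∂μ‖ ≤ ∫ ω, ‖Z (t + 1) ω‖ ∂μ := norm_integral_le_integral_norm _
      _ ≤ ρ * a t := hnorm t
  -- ∑' b = ∫ S
  have hSeq : ∑' t, b t = ∫ ω, S ω ∂μ := by
    simp only [funext hbfull]
    rw [integral_tsum_of_summable_integral_norm (fun t => hZint (t+1))
      (Summable.of_nonneg_of_le (fun t => integral_nonneg fun ω => norm_nonneg _)
        hnorm (ha_sum.mul_left ρ))]
    congr 1
    ext ω
    rw [← htel ω]
    rw [tsum_eq_sum (s := Finset.range (τ ω)) (by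
      intro t ht
      simp only [Finset.mem_range, not_lt] at ht
      exact hzero _ _ (by omega))]
    rw [← Finset.Ico_add_one_right_eq_Icc, Finset.sum_Ico_eq_sum_range]
    simp [add_comm]
  -- conclude
  rw [le_div_iff₀ hC, hτeq]
  calc (∑' t, a t) * C = ∑' t, C * a t := by
        rw [← tsum_mul_right]; congr 1; ext t; ring
    _ ≤ ∑' t, b t := Summable.tsum_le_tsum hCb ((ha_sum.mul_left C)) hb_sum
    _ = ∫ ω, S ω ∂μ := hSeq
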